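/- Duality identity relating the estimator to the primal and dual energy functionals (Section 4.1): Let (v, cv) and (τ, cτ) be curl pairs and f square-ν-integrable, and assume the integration-by-parts identity ∫ τ·cv dν = ∫ cτ·v dν. Then 2 ( J(v) − J*(τ) ) = ∫ μ⁻¹|μ τ − cv|² dν + ∫ β⁻¹|cτ + β v − f|² dν, where J(v) := ½ ∫ (μ⁻¹|cv|² + β|v|²) dν − ∫ f·v dν and J*(τ) := −½ ∫ μ|τ|² dν − ½ ∫ β⁻¹|f − cτ|² dν. -/

import Mathlib

open MeasureTheory RealInnerProductSpace

private lemma inner_integrable_aux {Ω : Type*} [MeasurableSpace Ω] {ν : Measure Ω}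
    {a b : Ω → EuclideanSpace ℝ (Fin 3)} (ha : MemLp a 2 ν) (hb : MemLp b 2 ν) :
    Integrable (fun x => ⟪a x, b x⟫) ν := by
  refine Integrable.mono'
    (((ha.norm.integrable_sq).add (hb.norm.integrable_sq)).const_mul (1/2))
    (ha.1.inner hb.1) ?_
  filter_upwards with x
  have h1 := abs_real_inner_le_norm (a x) (b x)
  have h2 : ‖a x‖ * ‖b x‖ ≤ 1/2 * (‖a x‖^2 + ‖b x‖^2) := by
    nlinarith [sq_nonneg (‖a x‖ - ‖b x‖)]
  calc ‖⟪a x, b x⟫‖ = |⟪a x, b x⟫| := rfl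
    _ ≤ ‖a x‖ * ‖b x‖ := h1
    _ ≤ 1/2 * (‖a x‖^2 + ‖b x‖^2) := h2

/-- Duality identity relating the estimator to the primal and dual energy
functionals (Section 4.1): 2 (J(v) − J*(τ)) = η(v,τ)². -/
theorem duality_identity_estimator
    {Ω : Type*} [MeasurableSpace Ω] (ν : MeasureTheory.Measure Ω)
    (μ β : Ω → ℝ) (m₁ m₂ b₁ b₂ : ℝ)
    (hm₁ : 0 < m₁) (hm₁₂ : m₁ ≤ m₂) (hb₁ : 0 < b₁) (hb₁₂ : b₁ ≤ b₂)
    (hμmeas : Measurable μ) (hβmeas : Measurable β)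
    (hμbd : ∀ᵐ x ∂ν, m₁ ≤ μ x ∧ μ x ≤ m₂)
    (hβbd : ∀ᵐ x ∂ν, b₁ ≤ β x ∧ β x ≤ b₂)
    (v cv τ cτ f : Ω → EuclideanSpace ℝ (Fin 3))
    (hv : MemLp v 2 ν) (hcv : MemLp cv 2 ν)
    (hτ : MemLp τ 2 ν) (hcτ : MemLp cτ 2 ν)
    (hf : MemLp f 2 ν)
    (hibp : ∫ x, ⟪τ x, cv x⟫ ∂ν = ∫ x, ⟪cτ x, v x⟫ ∂ν) :
    2 * (((1 / 2) * (∫ x, ((μ x)⁻¹ * ‖cv x‖ ^ 2 + β x * ‖v x‖ ^ 2) ∂ν)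
            - ∫ x, ⟪f x, v x⟫ ∂ν)
         - (-(1 / 2) * (∫ x, μ x * ‖τ x‖ ^ 2 ∂ν)
            - (1 / 2) * (∫ x, (β x)⁻¹ * ‖f x - cτ x‖ ^ 2 ∂ν)))
    = (∫ x, (μ x)⁻¹ * ‖μ x • τ x - cv x‖ ^ 2 ∂ν)
      + (∫ x, (β x)⁻¹ * ‖cτ x + β x • v x - f x‖ ^ 2 ∂ν) := by
  -- a.e. positivity / bounds
  have hμinvbd : ∀ᵐ x ∂ν, ‖(μ x)⁻¹‖ ≤ m₁⁻¹ := by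
    filter_upwards [hμbd] with x hx
    have hx0 : 0 < μ x := lt_of_lt_of_le hm₁ hx.1
    rw [Real.norm_eq_abs, abs_of_pos (inv_pos.mpr hx0)]
    exact inv_anti₀ hm₁ hx.1
  have hμnbd : ∀ᵐ x ∂ν, ‖μ x‖ ≤ m₂ := by
    filter_upwards [hμbd] with x hx
    rw [Real.norm_eq_abs, abs_of_pos (lt_of_lt_of_le hm₁ hx.1)]; exact hx.2
  have hβinvbd : ∀ᵐ x ∂ν, ‖(β x)⁻¹‖ ≤ b₁⁻¹ := by
    filter_upwards [hβbd] with x hx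
    have hx0 : 0 < β x := lt_of_lt_of_le hb₁ hx.1
    rw [Real.norm_eq_abs, abs_of_pos (inv_pos.mpr hx0)]
    exact inv_anti₀ hb₁ hx.1
  have hβnbd : ∀ᵐ x ∂ν, ‖β x‖ ≤ b₂ := by
    filter_upwards [hβbd] with x hx
    rw [Real.norm_eq_abs, abs_of_pos (lt_of_lt_of_le hb₁ hx.1)]; exact hx.2
  -- integrability of the pieces
  have iτμ : Integrable (fun x => μ x * ‖τ x‖ ^ 2) ν :=
    (hτ.norm.integrable_sq).bdd_mul hμmeas.aestronglyMeasurable hμnbd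
  have icvμ : Integrable (fun x => (μ x)⁻¹ * ‖cv x‖ ^ 2) ν :=
    (hcv.norm.integrable_sq).bdd_mul hμmeas.inv.aestronglyMeasurable hμinvbd
  have ivβ : Integrable (fun x => β x * ‖v x‖ ^ 2) ν :=
    (hv.norm.integrable_sq).bdd_mul hβmeas.aestronglyMeasurable hβnbd
  have ifcτβ : Integrable (fun x => (β x)⁻¹ * ‖f x - cτ x‖ ^ 2) ν :=
    ((hf.sub hcτ).norm.integrable_sq).bdd_mul hβmeas.inv.aestronglyMeasurable hβinvbd
  have iτcv : Integrable (fun x => ⟪τ x, cv x⟫) ν := inner_integrable_aux hτ hcv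
  have icτv : Integrable (fun x => ⟪cτ x, v x⟫) ν := inner_integrable_aux hcτ hv
  have ifv : Integrable (fun x => ⟪f x, v x⟫) ν := inner_integrable_aux hf hv
  -- pointwise identities
  have hA : (fun x => (μ x)⁻¹ * ‖μ x • τ x - cv x‖ ^ 2)
      =ᵐ[ν] fun x => μ x * ‖τ x‖ ^ 2 - 2 * ⟪τ x, cv x⟫ + (μ x)⁻¹ * ‖cv x‖ ^ 2 := by
    filter_upwards [hμbd] with x hx
    have hx0 : 0 < μ x := lt_of_lt_of_le hm₁ hx.1
    have hexp : ‖μ x • τ x - cv x‖ ^ 2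
        = (μ x)^2 * ‖τ x‖ ^ 2 - 2 * (μ x * ⟪τ x, cv x⟫) + ‖cv x‖ ^ 2 := by
      rw [norm_sub_sq_real, norm_smul, real_inner_smul_left, Real.norm_eq_abs]
      rw [mul_pow, sq_abs]
    rw [hexp]
    field_simp
  have hB : (fun x => (β x)⁻¹ * ‖cτ x + β x • v x - f x‖ ^ 2)
      =ᵐ[ν] fun x => (β x)⁻¹ * ‖f x - cτ x‖ ^ 2 + 2 * ⟪cτ x, v x⟫ - 2 * ⟪f x, v x⟫
        + β x * ‖v x‖ ^ 2 := by
    filter_upwards [hβbd] with x hx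
    have hx0 : 0 < β x := lt_of_lt_of_le hb₁ hx.1
    have h1 : cτ x + β x • v x - f x = (cτ x - f x) + β x • v x := by abel
    have hexp : ‖cτ x + β x • v x - f x‖ ^ 2
        = ‖cτ x - f x‖ ^ 2 + 2 * (β x * (⟪cτ x, v x⟫ - ⟪f x, v x⟫)) + (β x)^2 * ‖v x‖ ^ 2 := by
      rw [h1, norm_add_sq_real, real_inner_smul_right, norm_smul, Real.norm_eq_abs, mul_pow,
        sq_abs, inner_sub_left]
    have h2 : ‖f x - cτ x‖ = ‖cτ x - f x‖ := norm_sub_rev _ _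
    rw [hexp, h2]
    field_simp
    ring
  -- integrate
  have eA1 : ∫ x, ((μ x * ‖τ x‖ ^ 2 - 2 * ⟪τ x, cv x⟫) + (μ x)⁻¹ * ‖cv x‖ ^ 2) ∂ν
      = (∫ x, (μ x * ‖τ x‖ ^ 2 - 2 * ⟪τ x, cv x⟫) ∂ν) + ∫ x, (μ x)⁻¹ * ‖cv x‖ ^ 2 ∂ν :=
    integral_add (iτμ.sub (iτcv.const_mul 2)) icvμ
  have eA2 : ∫ x, (μ x * ‖τ x‖ ^ 2 - 2 * ⟪τ x, cv x⟫) ∂ν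
      = (∫ x, μ x * ‖τ x‖ ^ 2 ∂ν) - ∫ x, 2 * ⟪τ x, cv x⟫ ∂ν :=
    integral_sub iτμ (iτcv.const_mul 2)
  have eA3 : ∫ x, 2 * ⟪τ x, cv x⟫ ∂ν = 2 * ∫ x, ⟪τ x, cv x⟫ ∂ν :=
    integral_const_mul 2 _
  have hAint : ∫ x, (μ x)⁻¹ * ‖μ x • τ x - cv x‖ ^ 2 ∂ν
      = ∫ x, μ x * ‖τ x‖ ^ 2 ∂ν - 2 * ∫ x, ⟪τ x, cv x⟫ ∂ν
        + ∫ x, (μ x)⁻¹ * ‖cv x‖ ^ 2 ∂ν := by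
    rw [integral_congr_ae hA, eA1, eA2, eA3]
  have eB1 : ∫ x, (((β x)⁻¹ * ‖f x - cτ x‖ ^ 2 + 2 * ⟪cτ x, v x⟫ - 2 * ⟪f x, v x⟫)
        + β x * ‖v x‖ ^ 2) ∂ν
      = (∫ x, ((β x)⁻¹ * ‖f x - cτ x‖ ^ 2 + 2 * ⟪cτ x, v x⟫ - 2 * ⟪f x, v x⟫) ∂ν)
        + ∫ x, β x * ‖v x‖ ^ 2 ∂ν :=
    integral_add ((ifcτβ.add (icτv.const_mul 2)).sub (ifv.const_mul 2)) ivβ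
  have eB2 : ∫ x, ((β x)⁻¹ * ‖f x - cτ x‖ ^ 2 + 2 * ⟪cτ x, v x⟫ - 2 * ⟪f x, v x⟫) ∂ν
      = (∫ x, ((β x)⁻¹ * ‖f x - cτ x‖ ^ 2 + 2 * ⟪cτ x, v x⟫) ∂ν) - ∫ x, 2 * ⟪f x, v x⟫ ∂ν :=
    integral_sub (ifcτβ.add (icτv.const_mul 2)) (ifv.const_mul 2)
  have eB3 : ∫ x, ((β x)⁻¹ * ‖f x - cτ x‖ ^ 2 + 2 * ⟪cτ x, v x⟫) ∂ν
      = (∫ x, (β x)⁻¹ * ‖f x - cτ x‖ ^ 2 ∂ν) + ∫ x, 2 * ⟪cτ x, v x⟫ ∂ν :=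
    integral_add ifcτβ (icτv.const_mul 2)
  have eB4 : ∫ x, 2 * ⟪cτ x, v x⟫ ∂ν = 2 * ∫ x, ⟪cτ x, v x⟫ ∂ν := integral_const_mul 2 _
  have eB5 : ∫ x, 2 * ⟪f x, v x⟫ ∂ν = 2 * ∫ x, ⟪f x, v x⟫ ∂ν := integral_const_mul 2 _
  have hBint : ∫ x, (β x)⁻¹ * ‖cτ x + β x • v x - f x‖ ^ 2 ∂ν
      = ∫ x, (β x)⁻¹ * ‖f x - cτ x‖ ^ 2 ∂ν + 2 * ∫ x, ⟪cτ x, v x⟫ ∂ν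
        - 2 * ∫ x, ⟪f x, v x⟫ ∂ν + ∫ x, β x * ‖v x‖ ^ 2 ∂ν := by
    rw [integral_congr_ae hB, eB1, eB2, eB3, eB4, eB5]
  have hLsplit : ∫ x, ((μ x)⁻¹ * ‖cv x‖ ^ 2 + β x * ‖v x‖ ^ 2) ∂ν
      = ∫ x, (μ x)⁻¹ * ‖cv x‖ ^ 2 ∂ν + ∫ x, β x * ‖v x‖ ^ 2 ∂ν :=
    integral_add icvμ ivβ
  rw [hAint, hBint, hLsplit, hibp]
  ring
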